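/- Let A be a real n×m matrix (n ≤ m) with all columns nonzero and no two columns scalar multiples of each other, let v be a vertex of the zonotope Z(A), let γ denote the standard Gaussian measure on ℝ^n, and let x be a standard Gaussian vector on ℝ^n. Then the probability that x satisfies ⟨a_i, x⟩ ≠ 0 for all i and A·sign(Aᵀx) = v equals γ(N_{Z(A)}(v)). -/

import Mathlib

open Matrix MeasureTheory ProbabilityTheory

/-- The zonotope generated by the columns of an `n × m` real matrix `A`. -/
def zonotope {n m : ℕ} (A : Matrix (Fin n) (Fin m) ℝ) : Set (Fin n → ℝ) :=
  {v | ∃ x : Fin m → ℝ, (∀ i, x i ∈ Set.Icc (-1 : ℝ) 1) ∧ v = A.mulVec x}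

/-- The sign vector `sign(Aᵀ x) ∈ {-1,1}^m` (entries are `Real.sign ⟨aᵢ, x⟩`). -/
noncomputable def signVec {n m : ℕ} (A : Matrix (Fin n) (Fin m) ℝ) (x : Fin n → ℝ) :
    Fin m → ℝ :=
  fun i => Real.sign (Aᵀ.mulVec x i)

/-- The normal cone of a set `K ⊆ ℝⁿ` at a point `v`. -/
def normalCone {n : ℕ} (K : Set (Fin n → ℝ)) (v : Fin n → ℝ) : Set (Fin n → ℝ) :=
  {x | ∀ z ∈ K, x ⬝ᵥ (z - v) ≤ 0}

/-- The standard Gaussian measure on `ℝⁿ`. -/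
noncomputable def stdGaussianPi (n : ℕ) : Measure (Fin n → ℝ) :=
  Measure.pi fun _ => gaussianReal 0 1

lemma sign_mul_eq_abs {d : ℝ} (hd : d ≠ 0) : Real.sign d * d = |d| := by
  rcases hd.lt_or_gt with h | h
  · rw [Real.sign_of_neg h, abs_of_neg h]; ring
  · rw [Real.sign_of_pos h, abs_of_pos h]; ring

lemma gaussianPi_hyperplane {n : ℕ} (a : Fin n → ℝ) (ha : a ≠ 0) :
    stdGaussianPi n {x | a ⬝ᵥ x = 0} = 0 := by
  cases n with
  | zero => exact absurd (Subsingleton.elim a 0) ha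
  | succ N =>
    obtain ⟨j, hj⟩ : ∃ j, a j ≠ 0 := by
      by_contra h; push_neg at h; exact ha (funext h)
    set e := MeasurableEquiv.piFinSuccAbove (fun _ : Fin (N+1) => ℝ) j with he
    have hmp := measurePreserving_piFinSuccAbove
      (fun _ : Fin (N+1) => gaussianReal 0 1) j
    have hdp : Measurable fun x : Fin (N+1) → ℝ => a ⬝ᵥ x := by
      simp only [dotProduct]
      exact Finset.measurable_sum _ fun i _ => (measurable_pi_apply i).const_mul _
    have hHmeas : MeasurableSet {x : Fin (N+1) → ℝ | a ⬝ᵥ x = 0} :=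
      hdp (measurableSet_singleton 0)
    have himg : MeasurableSet (e '' {x : Fin (N+1) → ℝ | a ⬝ᵥ x = 0}) := by
      rw [MeasurableEquiv.image_eq_preimage_symm]
      exact e.symm.measurable hHmeas
    have hpre : {x : Fin (N+1) → ℝ | a ⬝ᵥ x = 0}
        = e ⁻¹' (e '' {x : Fin (N+1) → ℝ | a ⬝ᵥ x = 0}) := by
      rw [MeasurableEquiv.preimage_image]
    rw [stdGaussianPi, hpre, hmp.measure_preimage himg.nullMeasurableSet,
      Measure.prod_apply_symm himg]
    have hsec : ∀ y : Fin N → ℝ,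
        ((fun t : ℝ => (t, y)) ⁻¹' (e '' {x : Fin (N+1) → ℝ | a ⬝ᵥ x = 0}))
          ⊆ {-( ∑ k, a (j.succAbove k) * y k) / a j} := by
      intro y t ht
      simp only [Set.mem_preimage, MeasurableEquiv.image_eq_preimage_symm,
        Set.mem_setOf_eq, he, MeasurableEquiv.piFinSuccAbove_symm_apply, Fin.insertNthEquiv_apply] at ht
      have hexp : a ⬝ᵥ j.insertNth t y
          = a j * t + ∑ k, a (j.succAbove k) * y k := by
        simp only [dotProduct]
        rw [Fin.sum_univ_succAbove _ j]
        simp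
      replace ht : a ⬝ᵥ j.insertNth t y = 0 := ht
      rw [hexp] at ht
      have : t = -(∑ k, a (j.succAbove k) * y k) / a j := by
        field_simp
        linarith
      simpa using this
    refine le_antisymm ?_ (zero_le)
    calc ∫⁻ y, gaussianReal 0 1
          ((fun t : ℝ => (t, y)) ⁻¹' (e '' {x : Fin (N+1) → ℝ | a ⬝ᵥ x = 0}))
          ∂(Measure.pi fun _ : Fin N => gaussianReal 0 1)
        ≤ ∫⁻ _, 0 ∂(Measure.pi fun _ : Fin N => gaussianReal 0 1) := by
          refine lintegral_mono fun y => ?_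
          refine le_of_eq (measure_mono_null (hsec y) ?_)
          exact gaussianReal_absolutelyContinuous 0 one_ne_zero (measure_singleton _)
      _ = 0 := lintegral_zero

theorem prob_maps_to_vertex (n m : ℕ) (hnm : n ≤ m)
    (A : Matrix (Fin n) (Fin m) ℝ)
    (hcol : ∀ i, (fun j => A j i) ≠ 0)
    (hpair : ∀ i i', i ≠ i' → ∀ c : ℝ, (fun j => A j i) ≠ c • fun j => A j i')
    (v : Fin n → ℝ) (hv : v ∈ (zonotope A).extremePoints ℝ) :
    stdGaussianPi n
        {x | (∀ i, Aᵀ.mulVec x i ≠ 0) ∧ A.mulVec (signVec A x) = v} =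
      stdGaussianPi n (normalCone (zonotope A) v) := by
  set S := {x : Fin n → ℝ | (∀ i, Aᵀ.mulVec x i ≠ 0) ∧ A.mulVec (signVec A x) = v}
  set T := normalCone (zonotope A) v
  set Nbad := {x : Fin n → ℝ | ∃ i, Aᵀ.mulVec x i = 0}
  -- transpose mulVec as dot products
  have hdot : ∀ (x : Fin n → ℝ) (w : Fin m → ℝ),
      x ⬝ᵥ A.mulVec w = ∑ i, Aᵀ.mulVec x i * w i := by
    intro x w
    rw [dotProduct_mulVec, ← Matrix.mulVec_transpose]
    rfl
  have hNnull : stdGaussianPi n Nbad = 0 := by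
    have : Nbad ⊆ ⋃ i, {x : Fin n → ℝ | (fun j => A j i) ⬝ᵥ x = 0} := by
      intro x ⟨i, hi⟩
      exact Set.mem_iUnion.2 ⟨i, hi⟩
    refine measure_mono_null this (measure_iUnion_null fun i => ?_)
    exact gaussianPi_hyperplane _ (hcol i)
  -- S ⊆ T
  have hST : S ⊆ T := by
    rintro x ⟨hd, hsv⟩ z ⟨y, hy, rfl⟩
    have : x ⬝ᵥ (A.mulVec y - v) = ∑ i, Aᵀ.mulVec x i * (y i - signVec A x i) := by
      rw [← hsv, dotProduct_sub, hdot, hdot, ← Finset.sum_sub_distrib]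
      congr 1; ext i; ring
    rw [this]
    refine Finset.sum_nonpos fun i _ => ?_
    have h1 : Aᵀ.mulVec x i * signVec A x i = |Aᵀ.mulVec x i| := by
      rw [signVec, mul_comm]; exact sign_mul_eq_abs (hd i)
    have h2 : Aᵀ.mulVec x i * y i ≤ |Aᵀ.mulVec x i| := by
      calc Aᵀ.mulVec x i * y i ≤ |Aᵀ.mulVec x i * y i| := le_abs_self _
        _ = |Aᵀ.mulVec x i| * |y i| := abs_mul _ _
        _ ≤ |Aᵀ.mulVec x i| * 1 := by
            refine mul_le_mul_of_nonneg_left ?_ (abs_nonneg _)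
            exact abs_le.2 ⟨(hy i).1, (hy i).2⟩
        _ = |Aᵀ.mulVec x i| := mul_one _
    nlinarith [h1, h2]
  -- T ∩ good ⊆ S
  have hTS : ∀ x, x ∈ T → (∀ i, Aᵀ.mulVec x i ≠ 0) → x ∈ S := by
    intro x hxT hd
    refine ⟨hd, ?_⟩
    obtain ⟨ε, hε, hvε⟩ := hv.1
    have hsz : A.mulVec (signVec A x) ∈ zonotope A := by
      refine ⟨signVec A x, fun i => ?_, rfl⟩
      rcases Real.sign_apply_eq_of_ne_zero _ (hd i) with h | h <;>
        simp [signVec, h]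
    have hle := hxT _ hsz
    have hkey : x ⬝ᵥ (A.mulVec (signVec A x) - v)
        = ∑ i, (|Aᵀ.mulVec x i| - Aᵀ.mulVec x i * ε i) := by
      rw [hvε, dotProduct_sub, hdot, hdot, ← Finset.sum_sub_distrib]
      congr 1; ext i
      rw [signVec, mul_comm, sign_mul_eq_abs (hd i)]
    rw [hkey] at hle
    have hterm : ∀ i ∈ Finset.univ, 0 ≤ |Aᵀ.mulVec x i| - Aᵀ.mulVec x i * ε i := by
      intro i _
      have : Aᵀ.mulVec x i * ε i ≤ |Aᵀ.mulVec x i| := by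
        calc Aᵀ.mulVec x i * ε i ≤ |Aᵀ.mulVec x i * ε i| := le_abs_self _
          _ = |Aᵀ.mulVec x i| * |ε i| := abs_mul _ _
          _ ≤ |Aᵀ.mulVec x i| * 1 := by
              refine mul_le_mul_of_nonneg_left ?_ (abs_nonneg _)
              exact abs_le.2 ⟨(hε i).1, (hε i).2⟩
          _ = |Aᵀ.mulVec x i| := mul_one _
      linarith
    have hsum0 : ∑ i, (|Aᵀ.mulVec x i| - Aᵀ.mulVec x i * ε i) = 0 :=
      le_antisymm hle (Finset.sum_nonneg hterm)
    have heach := (Finset.sum_eq_zero_iff_of_nonneg hterm).1 hsum0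
    have hεs : ε = signVec A x := by
      funext i
      have h1 : Aᵀ.mulVec x i * ε i = |Aᵀ.mulVec x i| := by
        have := heach i (Finset.mem_univ i); linarith
      have h2 : Aᵀ.mulVec x i * signVec A x i = |Aᵀ.mulVec x i| := by
        rw [signVec, mul_comm]; exact sign_mul_eq_abs (hd i)
      exact mul_left_cancel₀ (hd i) (h1.trans h2.symm)
    rw [hvε, hεs]
  refine le_antisymm (measure_mono hST) ?_
  have hTcover : T ⊆ S ∪ Nbad := by
    intro x hx
    by_cases h : ∀ i, Aᵀ.mulVec x i ≠ 0
    · exact Or.inl (hTS x hx h)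
    · push_neg at h; exact Or.inr h
  calc stdGaussianPi n T ≤ stdGaussianPi n (S ∪ Nbad) := measure_mono hTcover
    _ ≤ stdGaussianPi n S + stdGaussianPi n Nbad := measure_union_le _ _
    _ = stdGaussianPi n S := by rw [hNnull, add_zero]
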